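/- Let 0 < β ≤ 1/2 and let A_1, ..., A_k (k ≥ 3) be nonempty subsets of ℕ. Assume A_1(n) = Θ(n^{β}), A_2(n) = Θ(n^{β}), and R_{A_1,...,A_k}(n) = Θ(n). Then R_{A_3,...,A_k}(n) = Θ(n^{1−2β}). -/

import Mathlib

open Filter Asymptotics

/-- The counting function `A(n) = |{a ∈ A : a ≤ n}|`. -/
noncomputable def countFn (A : Set ℕ) (n : ℕ) : ℕ := (A ∩ Set.Iic n).ncard

/-- `r_{A_1,…,A_k}(n) = |{(x_1,…,x_k) ∈ A_1 × ⋯ × A_k : x_1 + ⋯ + x_k = n}|`. -/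
noncomputable def rk {k : ℕ} (A : Fin k → Set ℕ) (n : ℕ) : ℕ :=
  {x : Fin k → ℕ | (∀ i, x i ∈ A i) ∧ ∑ i, x i = n}.ncard

/-- `R_{A_1,…,A_k}(n) = ∑_{j ≤ n} r_{A_1,…,A_k}(j)`. -/
noncomputable def Rk {k : ℕ} (A : Fin k → Set ℕ) (n : ℕ) : ℕ :=
  ∑ j ∈ Finset.range (n + 1), rk A j

/-- tuples with sum ≤ n -/
def Sle {k : ℕ} (A : Fin k → Set ℕ) (n : ℕ) : Set (Fin k → ℕ) :=
  {x | (∀ i, x i ∈ A i) ∧ ∑ i, x i ≤ n}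

lemma Sle_finite {k : ℕ} (A : Fin k → Set ℕ) (n : ℕ) : (Sle A n).Finite := by
  apply Set.Finite.subset (Set.Finite.pi (fun i : Fin k => Set.finite_Iic n))
  intro x hx
  rw [Set.mem_pi]
  intro i _
  exact le_trans (Finset.single_le_sum (f := x) (fun j _ => Nat.zero_le _)
    (Finset.mem_univ i)) hx.2

lemma level_finite {k : ℕ} (A : Fin k → Set ℕ) (n : ℕ) :
    ({x : Fin k → ℕ | (∀ i, x i ∈ A i) ∧ ∑ i, x i = n}).Finite := by
  apply (Sle_finite A n).subset
  intro x hx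
  exact ⟨hx.1, le_of_eq hx.2⟩

lemma Rk_eq_ncard {k : ℕ} (A : Fin k → Set ℕ) (n : ℕ) : Rk A n = (Sle A n).ncard := by
  induction n with
  | zero =>
      have : Sle A 0 = {x : Fin k → ℕ | (∀ i, x i ∈ A i) ∧ ∑ i, x i = 0} := by
        ext x; simp [Sle, Nat.le_zero]
      simp [Rk, rk, this]
  | succ n ih =>
      have hset : Sle A (n + 1) =
          Sle A n ∪ {x : Fin k → ℕ | (∀ i, x i ∈ A i) ∧ ∑ i, x i = n + 1} := by
        ext x
        simp only [Sle, Set.mem_setOf_eq, Set.mem_union]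
        constructor
        · rintro ⟨h1, h2⟩
          rcases Nat.lt_or_ge (∑ i, x i) (n+1) with h | h
          · exact Or.inl ⟨h1, by omega⟩
          · exact Or.inr ⟨h1, by omega⟩
        · rintro (⟨h1, h2⟩ | ⟨h1, h2⟩) <;> exact ⟨h1, by omega⟩
      have hdisj : Disjoint (Sle A n)
          {x : Fin k → ℕ | (∀ i, x i ∈ A i) ∧ ∑ i, x i = n + 1} := by
        rw [Set.disjoint_left]
        rintro x ⟨_, h2⟩ ⟨_, h4⟩
        omega
      rw [Rk, Finset.sum_range_succ, ← Rk, ih, hset,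
        Set.ncard_union_eq hdisj (Sle_finite A n) (level_finite A (n+1)), rk]

lemma ncard_prod {α β : Type*} (s : Set α) (t : Set β) :
    (s ×ˢ t).ncard = s.ncard * t.ncard := by
  rw [← Nat.card_coe_set_eq, Nat.card_congr (Equiv.Set.prod s t), Nat.card_prod,
    Nat.card_coe_set_eq, Nat.card_coe_set_eq]

lemma sum_split {k : ℕ} (hk : 3 ≤ k) (h2 : k - 2 + 2 = k) (x : Fin k → ℕ) :
    ∑ i, x i = x ⟨0, by omega⟩ + x ⟨1, by omega⟩ +
      ∑ i : Fin (k - 2), x (Fin.cast h2 (i.addNat 2)) := by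
  have h : 2 + (k - 2) = k := by omega
  have e1 : ∑ i, x i = ∑ i : Fin (2 + (k - 2)), x (Fin.cast h i) :=
    (Fintype.sum_equiv (finCongr h) _ x (fun i => rfl)).symm
  rw [e1, Fin.sum_univ_add, Fin.sum_univ_two]
  congr 1
  exact Finset.sum_congr rfl (fun i _ => by congr 1; exact Fin.ext (by simp [Nat.add_comm]))

lemma key_upper {k : ℕ} (hk : 2 < k) (A : Fin k → Set ℕ) (n : ℕ) :
    Rk A n ≤ countFn (A ⟨0, by omega⟩) n * countFn (A ⟨1, by omega⟩) n *
      Rk (fun i : Fin (k - 2) => A (Fin.cast (by omega) (i.addNat 2))) n := by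
  have hcast : k - 2 + 2 = k := by omega
  rw [Rk_eq_ncard, Rk_eq_ncard, countFn, countFn, ← ncard_prod, ← ncard_prod]
  have hfin : ((((A ⟨0, by omega⟩ ∩ Set.Iic n) ×ˢ (A ⟨1, by omega⟩ ∩ Set.Iic n)) ×ˢ
      Sle (fun i : Fin (k - 2) => A (Fin.cast (by omega) (i.addNat 2))) n)).Finite :=
    (((Set.finite_Iic n).inter_of_right _).prod ((Set.finite_Iic n).inter_of_right _)).prod
      (Sle_finite _ n)
  apply Set.ncard_le_ncard_of_injOn
      (fun x => ((x ⟨0, by omega⟩, x ⟨1, by omega⟩),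
        fun i : Fin (k - 2) => x (Fin.cast hcast (i.addNat 2)))) _ _ hfin
  · rintro x ⟨hx1, hx2⟩
    have hle : ∀ j : Fin k, x j ≤ n := fun j =>
      le_trans (Finset.single_le_sum (f := x) (fun j _ => Nat.zero_le _) (Finset.mem_univ j)) hx2
    refine ⟨⟨⟨hx1 _, hle _⟩, ⟨hx1 _, hle _⟩⟩, fun i => hx1 _, ?_⟩
    exact le_trans (Nat.le_add_left _ _) (le_of_eq_of_le (sum_split hk hcast x).symm hx2)
  · rintro x ⟨hx1, hx2⟩ y ⟨hy1, hy2⟩ h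
    simp only [Prod.mk.injEq] at h
    obtain ⟨⟨h0, h1⟩, h2⟩ := h
    funext j
    rcases Nat.lt_or_ge j.val 2 with hj | hj
    · interval_cases hv : j.val
      · have : j = ⟨0, by omega⟩ := Fin.ext hv
        rw [this]; exact h0
      · have : j = ⟨1, by omega⟩ := Fin.ext hv
        rw [this]; exact h1
    · have hjk := j.isLt
      have : j = Fin.cast hcast
          ((⟨j.val - 2, by omega⟩ : Fin (k - 2)).addNat 2) := Fin.ext (by simp; omega)
      rw [this]
      exact congrFun h2 ⟨j.val - 2, by omega⟩

lemma key_lower {k : ℕ} (hk : 2 < k) (A : Fin k → Set ℕ) (n : ℕ) :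
    countFn (A ⟨0, by omega⟩) n * countFn (A ⟨1, by omega⟩) n *
      Rk (fun i : Fin (k - 2) => A (Fin.cast (by omega) (i.addNat 2))) n ≤ Rk A (3 * n) := by
  have hcast : k - 2 + 2 = k := by omega
  rw [Rk_eq_ncard, Rk_eq_ncard, countFn, countFn, ← ncard_prod, ← ncard_prod]
  set g : ((ℕ × ℕ) × (Fin (k - 2) → ℕ)) → (Fin k → ℕ) := fun p j =>
    if j.val = 0 then p.1.1 else if j.val = 1 then p.1.2
    else p.2 ⟨j.val - 2, by have := j.isLt; omega⟩ with hg
  have g0 : ∀ p, g p ⟨0, by omega⟩ = p.1.1 := fun p => rfl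
  have g1 : ∀ p, g p ⟨1, by omega⟩ = p.1.2 := fun p => rfl
  have g2 : ∀ p (i : Fin (k - 2)), g p (Fin.cast hcast (i.addNat 2)) = p.2 i := by
    intro p i
    simp only [hg, Fin.coe_cast, Fin.coe_addNat]
    rw [if_neg (by omega), if_neg (by omega)]
    congr 1
  apply Set.ncard_le_ncard_of_injOn g _ _ (Sle_finite A (3 * n))
  · rintro ⟨⟨a, b⟩, t⟩ ⟨⟨⟨ha, ha'⟩, ⟨hb, hb'⟩⟩, ht1, ht2⟩
    constructor
    · intro i
      rcases Nat.lt_or_ge i.val 2 with hi | hi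
      · interval_cases hv : i.val
        · have hieq : i = ⟨0, by omega⟩ := Fin.ext hv
          rw [hieq, g0]; exact ha
        · have hieq : i = ⟨1, by omega⟩ := Fin.ext hv
          rw [hieq, g1]; exact hb
      · have hik := i.isLt
        have hieq : i = Fin.cast hcast
            ((⟨i.val - 2, by omega⟩ : Fin (k - 2)).addNat 2) := Fin.ext (by simp; omega)
        rw [hieq, g2]
        exact ht1 ⟨i.val - 2, by omega⟩
    · rw [sum_split hk hcast, g0, g1]
      have hs : ∑ i : Fin (k - 2), g ((a, b), t) (Fin.cast hcast (i.addNat 2)) = ∑ i, t i :=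
        Finset.sum_congr rfl (fun i _ => g2 ((a, b), t) i)
      rw [hs]
      show a + b + ∑ i, t i ≤ 3 * n
      have ht2' : ∑ i, t i ≤ n := ht2
      have ha'' : a ≤ n := ha'
      have hb'' : b ≤ n := hb'
      omega
  · rintro ⟨⟨a, b⟩, t⟩ - ⟨⟨a', b'⟩, t'⟩ - h
    have h0 : a = a' :=
      ((g0 ((a, b), t)).symm.trans (congrFun h ⟨0, by omega⟩)).trans (g0 ((a', b'), t'))
    have h1 : b = b' :=
      ((g1 ((a, b), t)).symm.trans (congrFun h ⟨1, by omega⟩)).trans (g1 ((a', b'), t'))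
    have ht : t = t' := funext fun i =>
      ((g2 ((a, b), t) i).symm.trans (congrFun h (Fin.cast hcast (i.addNat 2)))).trans
        (g2 ((a', b'), t') i)
    simp [h0, h1, ht]

theorem stmt7 (β : ℝ) (hβ0 : 0 < β) (hβ1 : β ≤ 1 / 2)
    (k : ℕ) (hk : 3 ≤ k) (A : Fin k → Set ℕ)
    (hne : ∀ i, (A i).Nonempty)
    (h1 : ∃ c₁ c₂ : ℝ, 0 < c₁ ∧ 0 < c₂ ∧ ∀ᶠ n : ℕ in atTop,
      c₁ * (n : ℝ) ^ β ≤ (countFn (A ⟨0, by omega⟩) n : ℝ) ∧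
      (countFn (A ⟨0, by omega⟩) n : ℝ) ≤ c₂ * (n : ℝ) ^ β)
    (h2 : ∃ c₁ c₂ : ℝ, 0 < c₁ ∧ 0 < c₂ ∧ ∀ᶠ n : ℕ in atTop,
      c₁ * (n : ℝ) ^ β ≤ (countFn (A ⟨1, by omega⟩) n : ℝ) ∧
      (countFn (A ⟨1, by omega⟩) n : ℝ) ≤ c₂ * (n : ℝ) ^ β)
    (h3 : ∃ c₁ c₂ : ℝ, 0 < c₁ ∧ 0 < c₂ ∧ ∀ᶠ n : ℕ in atTop,
      c₁ * (n : ℝ) ≤ (Rk A n : ℝ) ∧ (Rk A n : ℝ) ≤ c₂ * (n : ℝ)) :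
    ∃ c₁ c₂ : ℝ, 0 < c₁ ∧ 0 < c₂ ∧ ∀ᶠ n : ℕ in atTop,
      c₁ * (n : ℝ) ^ (1 - 2 * β)
          ≤ (Rk (fun i : Fin (k - 2) => A (Fin.cast (by omega) (i.addNat 2))) n : ℝ) ∧
      (Rk (fun i : Fin (k - 2) => A (Fin.cast (by omega) (i.addNat 2))) n : ℝ)
          ≤ c₂ * (n : ℝ) ^ (1 - 2 * β) := by
  
  obtain ⟨a₁, a₂, ha₁, ha₂, hA⟩ := h1
  obtain ⟨b₁, b₂, hb₁, hb₂, hB⟩ := h2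
  obtain ⟨d₁, d₂, hd₁, hd₂, hD⟩ := h3
  have hD3 : ∀ᶠ n : ℕ in atTop, (Rk A (3 * n) : ℝ) ≤ d₂ * ((3 * n : ℕ) : ℝ) := by
    obtain ⟨N, hN⟩ := eventually_atTop.mp hD
    exact eventually_atTop.mpr ⟨N, fun n hn => (hN (3 * n) (by omega)).2⟩
  refine ⟨d₁ / (a₂ * b₂), 3 * d₂ / (a₁ * b₁), by positivity, by positivity, ?_⟩
  filter_upwards [hA, hB, hD, hD3, eventually_ge_atTop 1] with n hA' hB' hD' hD3' hn1
  have hn0 : (0 : ℝ) < (n : ℝ) := by exact_mod_cast hn1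
  set t : ℝ := (n : ℝ) ^ β with htdef
  have ht : 0 < t := Real.rpow_pos_of_pos hn0 β
  have hpow : (n : ℝ) ^ (1 - 2 * β) * (t * t) = (n : ℝ) := by
    rw [htdef, ← Real.rpow_add hn0, ← Real.rpow_add hn0]
    rw [show 1 - 2 * β + (β + β) = 1 by ring, Real.rpow_one]
  set R' : ℝ := (Rk (fun i : Fin (k - 2) => A (Fin.cast (by omega : k - 2 + 2 = k)
    (i.addNat 2))) n : ℝ) with hR'def
  have hR'0 : (0 : ℝ) ≤ R' := Nat.cast_nonneg _
  have hC0 : (0 : ℝ) ≤ (countFn (A ⟨0, by omega⟩) n : ℝ) := Nat.cast_nonneg _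
  have hC1 : (0 : ℝ) ≤ (countFn (A ⟨1, by omega⟩) n : ℝ) := Nat.cast_nonneg _
  have hup : (Rk A n : ℝ) ≤ (countFn (A ⟨0, by omega⟩) n : ℝ) *
      (countFn (A ⟨1, by omega⟩) n : ℝ) * R' := by
    rw [hR'def]
    exact_mod_cast key_upper hk A n
  have hlo : (countFn (A ⟨0, by omega⟩) n : ℝ) *
      (countFn (A ⟨1, by omega⟩) n : ℝ) * R' ≤ (Rk A (3 * n) : ℝ) := by
    rw [hR'def]
    exact_mod_cast key_lower hk A n
  constructor
  · -- lower bound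
    have chain : d₁ * (n : ℝ) ≤ (a₂ * b₂) * (t * t) * R' := by
      calc d₁ * (n : ℝ) ≤ (Rk A n : ℝ) := hD'.1
        _ ≤ (countFn (A ⟨0, by omega⟩) n : ℝ) * (countFn (A ⟨1, by omega⟩) n : ℝ) * R' := hup
        _ ≤ (a₂ * t) * (b₂ * t) * R' := by
            apply mul_le_mul_of_nonneg_right _ hR'0
            exact mul_le_mul hA'.2 hB'.2 hC1 (by positivity)
        _ = (a₂ * b₂) * (t * t) * R' := by ring
    rw [div_mul_eq_mul_div, div_le_iff₀ (by positivity)]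
    apply le_of_mul_le_mul_right _ (mul_pos ht ht)
    calc d₁ * (n : ℝ) ^ (1 - 2 * β) * (t * t) = d₁ * ((n : ℝ) ^ (1 - 2 * β) * (t * t)) := by ring
      _ = d₁ * (n : ℝ) := by rw [hpow]
      _ ≤ (a₂ * b₂) * (t * t) * R' := chain
      _ = R' * (a₂ * b₂) * (t * t) := by ring
  · -- upper bound
    have chain : (a₁ * b₁) * (t * t) * R' ≤ 3 * d₂ * (n : ℝ) := by
      calc (a₁ * b₁) * (t * t) * R' = (a₁ * t) * (b₁ * t) * R' := by ring
        _ ≤ (countFn (A ⟨0, by omega⟩) n : ℝ) * (countFn (A ⟨1, by omega⟩) n : ℝ) * R' := by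
            apply mul_le_mul_of_nonneg_right _ hR'0
            exact mul_le_mul hA'.1 hB'.1 (by positivity) hC0
        _ ≤ (Rk A (3 * n) : ℝ) := hlo
        _ ≤ d₂ * ((3 * n : ℕ) : ℝ) := hD3'
        _ = 3 * d₂ * (n : ℝ) := by push_cast; ring
    rw [div_mul_eq_mul_div, le_div_iff₀ (by positivity)]
    apply le_of_mul_le_mul_right _ (mul_pos ht ht)
    calc R' * (a₁ * b₁) * (t * t) = (a₁ * b₁) * (t * t) * R' := by ring
      _ ≤ 3 * d₂ * (n : ℝ) := chain
      _ = 3 * d₂ * ((n : ℝ) ^ (1 - 2 * β) * (t * t)) := by rw [hpow]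
      _ = 3 * d₂ * (n : ℝ) ^ (1 - 2 * β) * (t * t) := by ring
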